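/- If G is a P_t-free graph, then the treedepth of G is at most (tw(G)+1)^{t−1}, where tw(G) is the treewidth of G. -/

import Mathlib

namespace Stmt18Aux

open SimpleGraph Walk

variable {ι : Type} {T : SimpleGraph ι}

lemma dist_add_dist_le_of_mem_support {a b x : ι} (p : T.Walk a b) (hx : x ∈ p.support) :
    T.dist a x + T.dist x b ≤ p.length := by
  classical
  have h := congrArg Walk.length (p.take_spec hx)
  rw [SimpleGraph.Walk.length_append] at h
  have h1 := SimpleGraph.dist_le (p.takeUntil x hx)
  have h2 := SimpleGraph.dist_le (p.dropUntil x hx)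
  omega

lemma isPath_concat {a b c : ι} (p : T.Walk a b) (h : T.Adj b c) (hp : p.IsPath)
    (hc : c ∉ p.support) : (p.concat h).IsPath := by
  rw [← Walk.isPath_reverse_iff, Walk.reverse_concat, Walk.cons_isPath_iff]
  refine ⟨hp.reverse, ?_⟩
  rwa [Walk.support_reverse, List.mem_reverse]

lemma mem_support_of_geodesic (hT : T.IsTree) {a b x : ι} (p : T.Walk a b)
    (h : T.dist a x + T.dist x b = T.dist a b) : x ∈ p.support := by
  classical
  obtain ⟨q1, hq1⟩ := hT.isConnected.exists_walk_length_eq_dist a x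
  obtain ⟨q2, hq2⟩ := hT.isConnected.exists_walk_length_eq_dist x b
  have hQlen : (q1.append q2).length = T.dist a b := by
    rw [Walk.length_append]; omega
  have hQpath : (q1.append q2).IsPath := (q1.append q2).isPath_of_length_eq_dist hQlen
  have huniq := hT.IsAcyclic.path_unique ⟨q1.append q2, hQpath⟩ ⟨p.bypass, p.bypass_isPath⟩
  have hxQ : x ∈ (q1.append q2).support := by
    rw [Walk.mem_support_append_iff]; exact Or.inl q1.end_mem_support
  have : x ∈ p.bypass.support := by
    have hval := congrArg Subtype.val huniq
    simp only at hval
    rw [← hval]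
    exact hxQ
  exact p.support_bypass_subset this

lemma adj_dist_cases (hT : T.IsTree) (r : ι) {x y : ι} (hxy : T.Adj x y) :
    T.dist r y = T.dist r x + 1 ∨ T.dist r x = T.dist r y + 1 := by
  classical
  have hxy1 : T.dist x y = 1 := (SimpleGraph.dist_eq_one_iff_adj).2 hxy
  have hyx1 : T.dist y x = 1 := (SimpleGraph.dist_eq_one_iff_adj).2 hxy.symm
  have t1 : T.dist r y ≤ T.dist r x + T.dist x y := hT.isConnected.dist_triangle
  have t2 : T.dist r x ≤ T.dist r y + T.dist y x := hT.isConnected.dist_triangle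
  obtain ⟨q1, hq1⟩ := hT.isConnected.exists_walk_length_eq_dist r x
  by_cases hy : y ∈ q1.support
  · have := dist_add_dist_le_of_mem_support q1 hy
    omega
  · have hq1p : q1.IsPath := q1.isPath_of_length_eq_dist hq1
    have hP1 : (q1.concat hxy).IsPath := isPath_concat q1 hxy hq1p hy
    obtain ⟨q2, hq2p, hq2⟩ := hT.isConnected.exists_path_of_dist r y
    have huniq := hT.IsAcyclic.path_unique ⟨q1.concat hxy, hP1⟩ ⟨q2, hq2p⟩
    have hlen : (q1.concat hxy).length = q2.length := by
      have hval := congrArg Subtype.val huniq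
      simp only at hval
      rw [hval]
    rw [Walk.length_concat] at hlen
    omega

lemma anc_trans (hT : T.IsTree) (r i j k : ι)
    (hij : T.dist r j = T.dist r i + T.dist i j)
    (hjk : T.dist r k = T.dist r j + T.dist j k) :
    T.dist r k = T.dist r i + T.dist i k := by
  have t1 : T.dist i k ≤ T.dist i j + T.dist j k := hT.isConnected.dist_triangle
  have t2 : T.dist r k ≤ T.dist r i + T.dist i k := hT.isConnected.dist_triangle
  omega

lemma anc_anc (hT : T.IsTree) (r i j b : ι)
    (hib : T.dist r b = T.dist r i + T.dist i b)
    (hjb : T.dist r b = T.dist r j + T.dist j b)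
    (hij : T.dist r i ≤ T.dist r j) :
    T.dist r j = T.dist r i + T.dist i j := by
  obtain ⟨q1, hq1⟩ := hT.isConnected.exists_walk_length_eq_dist r i
  obtain ⟨q2, hq2⟩ := hT.isConnected.exists_walk_length_eq_dist i b
  have hj : j ∈ (q1.append q2).support := by
    apply mem_support_of_geodesic hT
    omega
  rw [Walk.mem_support_append_iff] at hj
  rcases hj with hj | hj
  · have h1 := dist_add_dist_le_of_mem_support q1 hj
    have h0 : T.dist j i = 0 := by omega
    have : j = i := by
      have := (hT.isConnected.dist_eq_zero_iff (u := j) (v := i)).1 h0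
      exact this
    subst this
    simp [SimpleGraph.dist_self]
  · have h1 := dist_add_dist_le_of_mem_support q2 hj
    have t1 : T.dist i b ≤ T.dist i j + T.dist j b := hT.isConnected.dist_triangle
    omega


lemma walk_in_set (hconn : (T.induce S).Connected) {m i : ι} (hm : m ∈ S) (hi : i ∈ S) :
    ∃ p : T.Walk m i, ∀ z ∈ p.support, z ∈ S := by
  have hr : (T.induce S).Reachable ⟨m, hm⟩ ⟨i, hi⟩ := hconn.preconnected _ _
  obtain ⟨W⟩ := hr
  let f : T.induce S →g T := ⟨Subtype.val, fun {a b} h => h⟩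
  refine ⟨W.map f, ?_⟩
  intro z hz
  rw [Walk.support_map, List.mem_map] at hz
  obtain ⟨z', _, rfl⟩ := hz
  exact z'.2

lemma anc_along_walk (hT : T.IsTree) (r : ι) (S : Set ι)
    (m : ι) (hmin : ∀ j ∈ S, T.dist r m ≤ T.dist r j) :
    ∀ {a c : ι} (Wk : T.Walk a c), (∀ z ∈ Wk.support, z ∈ S) →
      T.dist r a = T.dist r m + T.dist m a → T.dist r c = T.dist r m + T.dist m c := by
  classical
  intro a c Wk
  induction Wk with
  | nil => intro _ h; exact h
  | @cons a c _ hadj W ih =>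
    intro hS hanc
    have hcS : c ∈ S := hS c (by simp)
    have hac1 : T.dist a c = 1 := (SimpleGraph.dist_eq_one_iff_adj).2 hadj
    have hancc : T.dist r c = T.dist r m + T.dist m c := by
      rcases adj_dist_cases hT r hadj with hca | hca
      · have t1 : T.dist m c ≤ T.dist m a + T.dist a c := hT.isConnected.dist_triangle
        have t2 : T.dist r c ≤ T.dist r m + T.dist m c := hT.isConnected.dist_triangle
        omega
      · by_cases hma : m = a
        · exfalso
          have := hmin c hcS
          rw [← hma] at hca
          omega
        · obtain ⟨q1, hq1⟩ := hT.isConnected.exists_walk_length_eq_dist r c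
          have haq1 : a ∉ q1.support := by
            intro hmem
            have := dist_add_dist_le_of_mem_support q1 hmem
            omega
          have hP1 : (q1.concat hadj.symm).IsPath :=
            isPath_concat q1 hadj.symm (q1.isPath_of_length_eq_dist hq1) haq1
          obtain ⟨s1, hs1⟩ := hT.isConnected.exists_walk_length_eq_dist r m
          obtain ⟨s2, hs2⟩ := hT.isConnected.exists_walk_length_eq_dist m a
          have hP2len : (s1.append s2).length = T.dist r a := by
            rw [Walk.length_append]; omega
          have hP2 : (s1.append s2).IsPath := (s1.append s2).isPath_of_length_eq_dist hP2len
          have huniq := hT.IsAcyclic.path_unique ⟨q1.concat hadj.symm, hP1⟩ ⟨s1.append s2, hP2⟩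
          have hval := congrArg Subtype.val huniq
          simp only at hval
          have hmP1 : m ∈ (q1.concat hadj.symm).support := by
            rw [hval, Walk.mem_support_append_iff]
            exact Or.inl s1.end_mem_support
          rw [Walk.support_concat, List.mem_append] at hmP1
          have hmq1 : m ∈ q1.support := by
            rcases hmP1 with h | h
            · exact h
            · simp at h; exact absurd h hma
          have h1 := dist_add_dist_le_of_mem_support q1 hmq1
          have t2 : T.dist r c ≤ T.dist r m + T.dist m c := hT.isConnected.dist_triangle
          omega
    exact ih (fun z hz => hS z (by simp [hz])) hancc

lemma top_anc (hT : T.IsTree) (r : ι) (S : Set ι) (hconn : (T.induce S).Connected)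
    (m : ι) (hm : m ∈ S) (hmin : ∀ j ∈ S, T.dist r m ≤ T.dist r j) :
    ∀ i ∈ S, T.dist r i = T.dist r m + T.dist m i := by
  intro i hi
  obtain ⟨W, hW⟩ := walk_in_set hconn hm hi
  exact anc_along_walk hT r S m hmin W hW (by simp [SimpleGraph.dist_self])

lemma mem_bagset (hT : T.IsTree) {S : Set ι} (hconn : (T.induce S).Connected)
    {a b x : ι} (ha : a ∈ S) (hb : b ∈ S)
    (hx : T.dist a x + T.dist x b = T.dist a b) : x ∈ S := by
  obtain ⟨W, hW⟩ := walk_in_set hconn ha hb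
  exact hW x (mem_support_of_geodesic hT W hx)


lemma sr_aux {V : Type} (G : SimpleGraph V) (hT : T.IsTree) (r : ι)
    (bag : ι → Finset V) (top : V → ι)
    (hbagconn : ∀ v : V, (T.induce {i | v ∈ bag i}).Connected)
    (htopmem : ∀ v, v ∈ bag (top v))
    (htopmin : ∀ v j, v ∈ bag j → T.dist r (top v) ≤ T.dist r j)
    (hedge : ∀ u v : V, G.Adj u v → ∃ i, u ∈ bag i ∧ v ∈ bag i)
    (X : ι) :
    ∀ (l : List V) (q : V), T.dist r (top q) = T.dist r X + T.dist X (top q) →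
      List.Chain' G.Adj (q :: l) →
      (∀ z ∈ l.dropLast, T.dist r X ≤ T.dist r (top z)) →
      ∀ x, l.getLast? = some x → T.dist r (top x) ≤ T.dist r X → x ∈ bag X := by
  have htopanc : ∀ (z : V) (b : ι), z ∈ bag b →
      T.dist r b = T.dist r (top z) + T.dist (top z) b := by
    intro z b hb
    exact top_anc hT r {i | z ∈ bag i} (hbagconn z) (top z) (htopmem z)
      (fun j hj => htopmin z j hj) b hb
  intro l
  induction l with
  | nil => intro q _ _ _ x hx; simp at hx
  | cons z l' ih =>
    intro q hancq hch hint x hx hdx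
    have hqz : G.Adj q z := (List.isChain_cons_cons.1 hch).1
    have hch' : List.Chain' G.Adj (z :: l') := (List.isChain_cons_cons.1 hch).2
    obtain ⟨b, hqb, hzb⟩ := hedge q z hqz
    have hancqb := htopanc q b hqb
    have hXb : T.dist r b = T.dist r X + T.dist X b :=
      anc_trans hT r X (top q) b hancq hancqb
    have hancz := htopanc z b hzb
    cases l' with
    | nil =>
      have hxz : z = x := by simpa using hx
      subst hxz
      have hancxX : T.dist r X = T.dist r (top z) + T.dist (top z) X :=
        anc_anc hT r (top z) X b hancz hXb hdx
      have hgeo : T.dist (top z) X + T.dist X b = T.dist (top z) b := by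
        omega
      exact mem_bagset hT (hbagconn z) (htopmem z) hzb hgeo
    | cons z2 l'' =>
      have hzdrop : z ∈ (z :: z2 :: l'').dropLast := by
        rw [List.dropLast_cons₂]
        simp
      have hdz : T.dist r X ≤ T.dist r (top z) := hint z hzdrop
      have hancXz : T.dist r (top z) = T.dist r X + T.dist X (top z) :=
        anc_anc hT r X (top z) b hXb hancz hdz
      refine ih z hancXz hch' ?_ x ?_ hdx
      · intro y hy
        apply hint
        rw [List.dropLast_cons₂]
        simp [hy]
      · rw [← hx]
        rfl

end Stmt18Aux


namespace Stmt18Aux2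

variable {V ι : Type}

def ReachP (bag : ι → Finset V) (top : V → ι) (key : V → ℕ) : ℕ → V → V → Prop
  | 0 => fun v u => u = v
  | (s+1) => fun v u => ∃ x, x ∈ bag (top v) ∧ key x < key v ∧ ReachP bag top key s x u

def DSet [DecidableEq V] (bag : ι → Finset V) (top : V → ι) (v : V) : ℕ → Finset V
  | 0 => {v}
  | (s+1) => (DSet bag top v s).biUnion (fun x => bag (top x))

variable [DecidableEq V] (bag : ι → Finset V) (top : V → ι) (key : V → ℕ)
variable (hcov : ∀ x : V, x ∈ bag (top x))

include hcov in
lemma DSet_mono (v : V) (s : ℕ) : DSet bag top v s ⊆ DSet bag top v (s+1) := by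
  intro x hx
  exact Finset.mem_biUnion.2 ⟨x, hx, hcov x⟩

include hcov in
lemma DSet_mono_le (v : V) {s m : ℕ} (h : s ≤ m) : DSet bag top v s ⊆ DSet bag top v m := by
  induction m with
  | zero =>
    have : s = 0 := by omega
    subst this; exact fun _ h => h
  | succ m ih =>
    rcases Nat.lt_or_ge s (m+1) with h' | h'
    · exact (ih (by omega)).trans (DSet_mono bag top hcov v m)
    · have : s = m + 1 := by omega
      subst this; exact fun _ h => h

lemma DSet_sub (v x : V) (hx : x ∈ bag (top v)) (s : ℕ) :
    DSet bag top x s ⊆ DSet bag top v (s+1) := by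
  induction s with
  | zero =>
    intro y hy
    simp only [DSet, Finset.mem_singleton] at hy
    subst hy
    exact Finset.mem_biUnion.2 ⟨v, by simp [DSet], hx⟩
  | succ s ih =>
    intro y hy
    have hy' : ∃ z ∈ DSet bag top x s, y ∈ bag (top z) := Finset.mem_biUnion.1 hy
    obtain ⟨z, hz, hzy⟩ := hy'
    exact Finset.mem_biUnion.2 ⟨z, ih hz, hzy⟩

include hcov in
lemma reach_mem_DSet {s : ℕ} {v u : V} (h : ReachP bag top key s v u) {m : ℕ} (hm : s ≤ m) :
    u ∈ DSet bag top v m := by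
  induction s generalizing v m with
  | zero =>
    simp only [ReachP] at h
    subst h
    exact DSet_mono_le bag top hcov _ (Nat.zero_le m) (by simp [DSet])
  | succ s ih =>
    simp only [ReachP] at h
    obtain ⟨x, hx, _, hr⟩ := h
    have h1 : u ∈ DSet bag top x s := ih hr (le_refl s)
    have h2 : u ∈ DSet bag top v (s+1) := DSet_sub bag top v x hx s h1
    exact DSet_mono_le bag top hcov v hm h2

lemma DSet_card {w : ℕ} (hbag : ∀ i, (bag i).card ≤ w + 1) (v : V) (s : ℕ) :
    (DSet bag top v s).card ≤ (w+1)^s := by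
  induction s with
  | zero => simp [DSet]
  | succ s ih =>
    calc (DSet bag top v (s+1)).card ≤ ∑ x ∈ DSet bag top v s, (bag (top x)).card :=
          Finset.card_biUnion_le
      _ ≤ (DSet bag top v s).card * (w+1) := by
          apply Finset.sum_le_card_nsmul
          intro x _
          exact hbag _
      _ ≤ (w+1)^s * (w+1) := Nat.mul_le_mul_right _ ih
      _ = (w+1)^(s+1) := (pow_succ _ _).symm


lemma mem_of_getLast?_eq {α : Type*} {l : List α} {a : α} (h : l.getLast? = some a) : a ∈ l := by
  rw [List.getLast?_eq_some_iff] at h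
  obtain ⟨ys, rfl⟩ := h
  simp

lemma head_cons_dropWhile_not {α : Type*} (p : α → Bool) (l : List α) (x : α) (xs : List α)
    (h : l.dropWhile p = x :: xs) : p x = false := by
  induction l with
  | nil => simp at h
  | cons a as ih =>
    by_cases hpa : p a
    · rw [List.dropWhile_cons_of_pos hpa] at h; exact ih h
    · rw [List.dropWhile_cons_of_neg hpa] at h
      injection h with h1 h2
      subst h1
      simpa using hpa

lemma reach_of_list (G : SimpleGraph V)
    (hkeyinj : Function.Injective key)
    (hsr : ∀ (v x : V) (l : List V), l.Chain' G.Adj → l.head? = some v → l.getLast? = some x →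
         (∀ z ∈ l.dropLast.tail, key v < key z) → key x < key v → x ∈ bag (top v)) :
    ∀ (n : ℕ) (l : List V), l.length ≤ n → l.Nodup → l.Chain' G.Adj → ∀ v u, l.head? = some v →
    l.getLast? = some u → (∀ z ∈ l, key u ≤ key z) →
    ∃ s, s + 1 ≤ l.length ∧ ReachP bag top key s v u := by
  intro n
  induction n with
  | zero => intro l hl _ _ v u hv _ _; cases l <;> simp_all
  | succ n ih =>
    intro l hlen hnd hch v u hv hu hkeys
    rcases List.head?_eq_some_iff.1 hv with ⟨l₂, rfl⟩
    simp only [List.length_cons] at hlen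
    by_cases huv : u = v
    · exact ⟨0, by simp, huv⟩
    · have hkuv : key u < key v := by
        have h1 : key u ≤ key v := hkeys v (by simp)
        have : key u ≠ key v := fun h => huv (hkeyinj h)
        omega
      set p : V → Bool := fun z => decide (key v ≤ key z) with hp
      set tw := (v :: l₂).takeWhile p with htw
      set dw := (v :: l₂).dropWhile p with hdw
      have hsplit : tw ++ dw = v :: l₂ := List.takeWhile_append_dropWhile
      have hdwne : dw ≠ [] := by
        intro h0
        have humem : u ∈ v :: l₂ := mem_of_getLast?_eq hu
        have : u ∈ tw := by rw [← hsplit, h0, List.append_nil] at humem; exact humem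
        have := List.mem_takeWhile_imp this
        simp [hp] at this
        omega
      have htwcons : tw = v :: l₂.takeWhile p := by
        rw [htw, List.takeWhile_cons_of_pos]
        simp [hp]
      obtain ⟨x, dw', hdwcons⟩ : ∃ x dw', dw = x :: dw' := by
        cases hdweq : dw with
        | nil => exact absurd hdweq hdwne
        | cons a as => exact ⟨a, as, rfl⟩
      have hpx : p x = false := head_cons_dropWhile_not p (v :: l₂) x dw' (hdw ▸ hdwcons)
      have hkxv : key x < key v := by
        simp [hp] at hpx
        omega
      -- x ∈ bag (top v) via hsr applied to tw ++ [x]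
      have hm_prefix : tw ++ [x] <+: v :: l₂ := by
        rw [← hsplit, hdwcons]
        exact ⟨dw', by simp⟩
      have hxbag : x ∈ bag (top v) := by
        apply hsr v x (tw ++ [x]) (hch.prefix hm_prefix)
        · rw [htwcons]; simp
        · exact List.getLast?_concat
        · intro z hz
          rw [List.dropLast_concat] at hz
          rw [htwcons] at hz
          simp only [List.tail_cons] at hz
          have hzp : p z = true := List.mem_takeWhile_imp hz
          simp [hp] at hzp
          have hzl₂ : z ∈ l₂ := (List.takeWhile_prefix p).sublist.subset hz
          have hvnl₂ : v ∉ l₂ := (List.nodup_cons.1 hnd).1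
          have hzne : z ≠ v := fun h => hvnl₂ (h ▸ hzl₂)
          have : key z ≠ key v := fun h => hzne (hkeyinj h)
          omega
        · exact hkxv
      -- recurse on dw
      have htwne : tw.length ≥ 1 := by rw [htwcons]; simp
      have hlensum : tw.length + dw.length = l₂.length + 1 := by
        have := congrArg List.length hsplit
        simp at this
        omega
      have hdwsub : dw.Sublist (v :: l₂) := (List.dropWhile_suffix p).sublist
      obtain ⟨s', hs'len, hs'⟩ := ih dw (by omega) (hnd.sublist hdwsub)
        (hch.suffix (List.dropWhile_suffix p)) x u (by rw [hdwcons]; rfl)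
        (by rw [← List.getLast?_append_of_ne_nil tw hdwne, hsplit]; exact hu)
        (fun z hz => hkeys z (hdwsub.subset hz))
      refine ⟨s' + 1, by simp only [List.length_cons]; omega, ?_⟩
      exact ⟨x, hxbag, hkxv, hs'⟩

end Stmt18Aux2



/-- `G` contains an induced copy of `H`. -/
def HasInducedCopy {W V : Type*} (H : SimpleGraph W) (G : SimpleGraph V) : Prop :=
  ∃ f : W ↪ V, ∀ a b : W, G.Adj (f a) (f b) ↔ H.Adj a b

/-- `G` has a tree decomposition of width at most `w`: a tree `T` with bags of
size at most `w + 1` covering all vertices and edges, such that for every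
vertex the set of bags containing it induces a connected subtree. -/
def TreewidthLE {V : Type} (G : SimpleGraph V) (w : ℕ) : Prop :=
  ∃ (ι : Type) (T : SimpleGraph ι) (bag : ι → Finset V),
    T.IsTree ∧
    (∀ v : V, ∃ i, v ∈ bag i) ∧
    (∀ u v : V, G.Adj u v → ∃ i, u ∈ bag i ∧ v ∈ bag i) ∧
    (∀ v : V, (T.induce {i | v ∈ bag i}).Connected) ∧
    (∀ i, (bag i).card ≤ w + 1)

open scoped Classical in
/-- `G` has treedepth at most `k`: there is a forest order on `V` (a partial
order in which the set of ancestors of any vertex is a chain) such that every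
edge of `G` joins comparable vertices and every vertex has at most `k`
ancestors (itself included).  Such an order is exactly the ancestor relation of
an elimination forest of height at most `k`. -/
def TreedepthLE {V : Type} [Fintype V] (G : SimpleGraph V) (k : ℕ) : Prop :=
  ∃ le : V → V → Prop,
    (∀ v, le v v) ∧
    (∀ u v, le u v → le v u → u = v) ∧
    (∀ u v w, le u v → le v w → le u w) ∧
    (∀ u v, G.Adj u v → le u v ∨ le v u) ∧
    (∀ v u w, le u v → le w v → le u w ∨ le w u) ∧
    (∀ v, (Finset.univ.filter (fun u => le u v)).card ≤ k)

theorem stmt18 {V : Type} [Fintype V] (G : SimpleGraph V) (t : ℕ) (ht : 2 ≤ t)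
    (hPt : ¬ HasInducedCopy (SimpleGraph.pathGraph t) G)
    (w : ℕ) (hw : TreewidthLE G w) :
    TreedepthLE G ((w + 1) ^ (t - 1)) := by
  classical
  obtain ⟨ι, T, bag, hT, hcover, hedge, hbagconn, hbagcard⟩ := hw
  by_cases hVempty : IsEmpty V
  · refine ⟨Eq, fun v => rfl, fun u v h _ => h, fun u v w h1 h2 => h1.trans h2,
      fun u v h => (hVempty.false u).elim, fun v u w h1 h2 => (hVempty.false v).elim,
      fun v => (hVempty.false v).elim⟩
  · have hVne : Nonempty V := not_isEmpty_iff.1 hVempty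
    obtain ⟨v₀⟩ := hVne
    obtain ⟨r, -⟩ := hcover v₀
    -- the "top" bag of each vertex: a bag containing it of minimal depth
    have htopex : ∀ v : V, ∃ i, v ∈ bag i ∧ ∀ j, v ∈ bag j → T.dist r i ≤ T.dist r j := by
      intro v
      obtain ⟨i₀, hi₀⟩ := hcover v
      have hex : ∃ n, ∃ i, v ∈ bag i ∧ T.dist r i = n := ⟨_, i₀, hi₀, rfl⟩
      obtain ⟨i, hi, hieq⟩ := Nat.find_spec hex
      exact ⟨i, hi, fun j hj => by rw [hieq]; exact Nat.find_min' hex ⟨j, hj, rfl⟩⟩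
    choose top htopmem htopmin using htopex
    set C := Fintype.card V + 1 with hC
    set e := Fintype.equivFin V with he
    set key : V → ℕ := fun v => T.dist r (top v) * C + (e v).val with hkey
    have heC : ∀ v : V, (e v).val < C := fun v => lt_of_lt_of_le (e v).isLt (by omega)
    have keylt : ∀ u z : V, T.dist r (top u) < T.dist r (top z) → key u < key z := by
      intro u z h
      have h4 : T.dist r (top u) * C + C ≤ T.dist r (top z) * C := by
        have := Nat.mul_le_mul_right C (Nat.succ_le_of_lt h)
        rwa [Nat.succ_mul] at this
      have h2 : (e u).val < C := heC u
      simp only [hkey]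
      set A := T.dist r (top u) * C with hA
      set B := T.dist r (top z) * C with hB
      omega
    have keydle : ∀ u z : V, key u < key z → T.dist r (top u) ≤ T.dist r (top z) := by
      intro u z h
      by_contra h'
      push_neg at h'
      exact absurd (keylt z u h') (by omega)
    have hkeyinj : Function.Injective key := by
      intro u z h
      rcases Nat.lt_trichotomy (T.dist r (top u)) (T.dist r (top z)) with h' | h' | h'
      · exact absurd (keylt u z h') (by omega)
      · have h2 : T.dist r (top u) * C + (e u).val = T.dist r (top u) * C + (e z).val := by
          simp only [hkey] at h
          rw [h'] at h ⊢
          exact h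
        have h3 := Nat.add_left_cancel h2
        exact e.injective (Fin.ext h3)
      · exact absurd (keylt z u h') (by omega)
    -- the strong reachability lemma
    have hsr : ∀ (v x : V) (l : List V), l.Chain' G.Adj → l.head? = some v →
        l.getLast? = some x → (∀ z ∈ l.dropLast.tail, key v < key z) → key x < key v →
        x ∈ bag (top v) := by
      intro v x l hch hh hlast hint hkxv
      rcases List.head?_eq_some_iff.1 hh with ⟨l', rfl⟩
      cases l' with
      | nil =>
        simp only [List.getLast?_singleton, Option.some.injEq] at hlast
        exact absurd (hlast ▸ hkxv) (lt_irrefl _)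
      | cons a l'' =>
        apply Stmt18Aux.sr_aux G hT r bag top hbagconn htopmem htopmin hedge (top v)
          (a :: l'') v (by simp [SimpleGraph.dist_self]) hch ?_ x ?_ (keydle x v hkxv)
        · intro z hz
          have hz' : z ∈ (v :: a :: l'').dropLast.tail := by
            rw [List.dropLast_cons₂]
            simpa using hz
          exact keydle v z (hint z hz')
        · rw [← hlast]
          rfl
    -- the forest order
    set le : V → V → Prop := fun u v => u = v ∨ (key u < key v ∧ ∃ l : List V,
      l.Chain' G.Adj ∧ l.head? = some v ∧ l.getLast? = some u ∧ ∀ z ∈ l, key u ≤ key z)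
      with hle
    -- composition helper
    have hcomp : ∀ (a b c : V) (l2 l1 : List V),
        l2.Chain' G.Adj → l2.head? = some a → l2.getLast? = some b →
        (∀ z ∈ l2, key c ≤ key z) →
        l1.Chain' G.Adj → l1.head? = some b → l1.getLast? = some c →
        (∀ z ∈ l1, key c ≤ key z) → c ≠ b →
        ∃ l : List V, l.Chain' G.Adj ∧ l.head? = some a ∧ l.getLast? = some c ∧
          ∀ z ∈ l, key c ≤ key z := by
      intro a b c l2 l1 hch2 hh2 hl2 hm2 hch1 hh1 hl1 hm1 hcb
      rcases List.head?_eq_some_iff.1 hh1 with ⟨l1', rfl⟩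
      cases l1' with
      | nil =>
        simp only [List.getLast?_singleton, Option.some.injEq] at hl1
        exact absurd hl1.symm hcb
      | cons p l1'' =>
        rcases List.head?_eq_some_iff.1 hh2 with ⟨l2', rfl⟩
        refine ⟨(a :: l2') ++ (p :: l1''), ?_, by simp, ?_, ?_⟩
        · refine List.isChain_append.2 ⟨hch2, (List.isChain_cons_cons.1 hch1).2, ?_⟩
          intro x hx y hy
          rw [hl2] at hx
          simp only [Option.mem_def, Option.some.injEq, List.head?_cons] at hx hy
          rw [← hx, ← hy] at *
          exact hx ▸ hy ▸ (List.isChain_cons_cons.1 hch1).1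
        · rw [List.getLast?_append_of_ne_nil _ (by simp)]
          rw [← hl1]
          rfl
        · intro z hz
          rcases List.mem_append.1 hz with h | h
          · exact hm2 z h
          · exact hm1 z (by simp [h])
    refine ⟨le, fun v => Or.inl rfl, ?_, ?_, ?_, ?_, ?_⟩
    · -- antisymmetry
      rintro u v (rfl | ⟨h1, -⟩) h2
      · rfl
      · rcases h2 with rfl | ⟨h2, -⟩
        · rfl
        · omega
    · -- transitivity
      rintro u v w (rfl | ⟨hk1, l1, hch1, hh1, hl1, hm1⟩) h2
      · exact h2
      · rcases h2 with rfl | ⟨hk2, l2, hch2, hh2, hl2, hm2⟩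
        · exact Or.inr ⟨hk1, l1, hch1, hh1, hl1, hm1⟩
        · right
          refine ⟨hk1.trans hk2, ?_⟩
          have hucv : u ≠ v := by
            intro h
            rw [h] at hk1
            exact absurd hk1 (lt_irrefl _)
          exact hcomp w v u l2 l1 hch2 hh2 hl2
            (fun z hz => le_of_lt (lt_of_lt_of_le hk1 (hm2 z hz))) hch1 hh1 hl1 hm1 hucv
    · -- edges are comparable
      intro u v h
      have hne : u ≠ v := h.ne
      have hkne : key u ≠ key v := fun hk => hne (hkeyinj hk)
      rcases Nat.lt_or_ge (key u) (key v) with hk | hk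
      · left
        refine Or.inr ⟨hk, [v, u], List.isChain_pair.2 h.symm, rfl, rfl, ?_⟩
        intro z hz
        simp only [List.mem_cons, List.not_mem_nil, or_false] at hz
        rcases hz with rfl | rfl
        · exact hk.le
        · exact le_rfl
      · right
        have hk' : key v < key u := by omega
        refine Or.inr ⟨hk', [u, v], List.isChain_pair.2 h, rfl, rfl, ?_⟩
        intro z hz
        simp only [List.mem_cons, List.not_mem_nil, or_false] at hz
        rcases hz with rfl | rfl
        · exact hk'.le
        · exact le_rfl
    · -- ancestors form a chain
      rintro v u x (rfl | ⟨hk1, l1, hch1, hh1, hl1, hm1⟩) h2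
      · rcases h2 with rfl | h2
        · exact Or.inl (Or.inl rfl)
        · exact Or.inr (Or.inr h2)
      · rcases h2 with rfl | ⟨hk2, l2, hch2, hh2, hl2, hm2⟩
        · exact Or.inl (Or.inr ⟨hk1, l1, hch1, hh1, hl1, hm1⟩)
        · by_cases hux : u = x
          · exact Or.inl (Or.inl hux)
          · have hkne : key u ≠ key x := fun hk => hux (hkeyinj hk)
            -- reverse list trick
            have hrev : ∀ (y y' : V) (ly ly' : List V), key y < key y' →
                ly.Chain' G.Adj → ly.head? = some v → ly.getLast? = some y →
                (∀ z ∈ ly, key y ≤ key z) →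
                ly'.Chain' G.Adj → ly'.head? = some v → ly'.getLast? = some y' →
                (∀ z ∈ ly', key y' ≤ key z) →
                le y y' := by
              intro y y' ly ly' hkyy hchy hhy hly hmy hchy' hhy' hly' hmy'
              right
              refine ⟨hkyy, ?_⟩
              have hchrev : ly'.reverse.Chain' G.Adj := by
                exact List.isChain_reverse.2 (List.IsChain.imp (fun ⦃_ _⦄ hab => hab.symm) hchy')
              have hyne : y ≠ v := by
                intro hyv
                subst hyv
                have h1 := hmy' y (by
                  have := List.head?_eq_some_iff.1 hhy'
                  obtain ⟨tl, rfl⟩ := this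
                  simp)
                omega
              exact hcomp y' v y ly'.reverse ly
                (List.isChain_reverse.2 (List.IsChain.imp (fun ⦃_ _⦄ hab => hab.symm) hchy'))
                (by rw [List.head?_reverse]; exact hly')
                (by rw [List.getLast?_reverse]; exact hhy')
                (fun z hz => le_of_lt (lt_of_lt_of_le hkyy (hmy' z (List.mem_reverse.1 hz))))
                hchy hhy hly hmy hyne
            rcases Nat.lt_or_ge (key u) (key x) with hk | hk
            · exact Or.inl (hrev u x l1 l2 hk hch1 hh1 hl1 hm1 hch2 hh2 hl2 hm2)
            · have hk' : key x < key u := by omega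
              exact Or.inr (hrev x u l2 l1 hk' hch2 hh2 hl2 hm2 hch1 hh1 hl1 hm1)
    · -- cardinality bound
      intro v
      have hsub : ∀ u : V, le u v → u ∈ Stmt18Aux2.DSet bag top v (t-2) := by
        intro u hu
        rcases hu with rfl | ⟨hk, l₀, hch₀, hh₀, hl₀, hm₀⟩
        · exact Stmt18Aux2.reach_mem_DSet bag top key htopmem
            (show Stmt18Aux2.ReachP bag top key 0 u u by simp [Stmt18Aux2.ReachP])
            (Nat.zero_le _)
        · -- take a minimum length list
          set P : ℕ → Prop := fun n => ∃ l : List V, l.Chain' G.Adj ∧ l.head? = some v ∧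
            l.getLast? = some u ∧ (∀ z ∈ l, key u ≤ key z) ∧ l.length = n with hP
          have hex : ∃ n, P n := ⟨l₀.length, l₀, hch₀, hh₀, hl₀, hm₀, rfl⟩
          obtain ⟨l, hch, hh, hl, hm, hlen⟩ := Nat.find_spec hex
          have hmin : ∀ m, m < Nat.find hex → ¬ P m := fun m hm' => Nat.find_min hex hm'
          have hadj : ∀ (i : ℕ) (h : i + 1 < l.length),
              G.Adj (l[i]'(by omega)) (l[i+1]'h) := by
            intro i h
            have := List.isChain_iff_getElem.1 hch i (by omega)
            simpa [List.get_eq_getElem] using this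
          have hlne : l ≠ [] := by
            intro h0
            rw [h0] at hh
            simp at hh
          have hht : ∀ k : ℕ, 0 < k → (l.take k).head? = some v := by
            rcases List.head?_eq_some_iff.1 hh with ⟨lr, hlr⟩
            intro k hk
            rw [hlr]
            cases k with
            | zero => omega
            | succ k => simp
          have hdl : ∀ k, k < l.length → (l.drop k).getLast? = some u := by
            intro k hk
            have hl' := hl
            rw [← List.take_append_drop k l] at hl'
            rwa [List.getLast?_append_of_ne_nil _
              (List.ne_nil_of_length_pos (by rw [List.length_drop]; omega))] at hl'
          have htl : ∀ (i : ℕ) (hi : i < l.length),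
              (l.take (i+1)).getLast? = some (l[i]'hi) := by
            intro i hi
            rw [List.take_succ, List.getElem?_eq_getElem hi]
            rw [Option.toList_some]
            exact List.getLast?_concat
          have hdh : ∀ (j : ℕ) (hj : j < l.length),
              (l.drop j).head? = some (l[j]'hj) := by
            intro j hj
            rw [List.drop_eq_getElem_cons hj]
            rfl
          have hshort : ∀ (i j : ℕ) (hj : j < l.length) (hij : i < j),
              (l[i]'(by omega) = l[j]'hj ∨
                (i + 2 ≤ j ∧ G.Adj (l[i]'(by omega)) (l[j]'hj))) → False := by
            intro i j hj hij hcase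
            rcases hcase with hdup | ⟨hij2, hadjij⟩
            · by_cases hjl : j + 1 < l.length
              · -- duplicate, not at the end
                refine hmin ((i+1) + (l.length - (j+1))) (by rw [← hlen]; omega) ?_
                refine ⟨l.take (i+1) ++ l.drop (j+1), ?_, ?_, ?_, ?_, ?_⟩
                · refine List.isChain_append.2 ⟨hch.prefix (List.take_prefix _ _),
                    hch.suffix (List.drop_suffix _ _), ?_⟩
                  intro x hx y hy
                  rw [htl i (by omega)] at hx
                  rw [hdh (j+1) hjl] at hy
                  simp only [Option.mem_def, Option.some.injEq] at hx hy
                  rw [← hx, ← hy, hdup]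
                  exact hadj j hjl
                · rw [List.head?_append_of_ne_nil]
                  · exact hht (i+1) (by omega)
                  · exact List.ne_nil_of_length_pos (by rw [List.length_take]; omega)
                · rw [List.getLast?_append_of_ne_nil _
                    (List.ne_nil_of_length_pos (by rw [List.length_drop]; omega))]
                  exact hdl (j+1) hjl
                · intro z hz
                  rcases List.mem_append.1 hz with h | h
                  · exact hm z (List.take_subset _ _ h)
                  · exact hm z (List.drop_subset _ _ h)
                · rw [List.length_append, List.length_take, List.length_drop]
                  omega
              · -- duplicate at the end : l[j] = u
                have hju : l[j]'hj = u := by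
                  have h1 := hdl j hj
                  rw [List.drop_eq_getElem_cons hj] at h1
                  have h2 : l.drop (j+1) = [] := by
                    rw [List.drop_eq_nil_iff]
                    omega
                  rw [h2] at h1
                  simpa using h1
                refine hmin (i+1) (by rw [← hlen]; omega) ?_
                refine ⟨l.take (i+1), hch.prefix (List.take_prefix _ _),
                  hht (i+1) (by omega), ?_, ?_, ?_⟩
                · rw [htl i (by omega), hdup, hju]
                · intro z hz
                  exact hm z (List.take_subset _ _ hz)
                · rw [List.length_take]
                  omega
            · -- chord
              refine hmin ((i+1) + (l.length - j)) (by rw [← hlen]; omega) ?_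
              refine ⟨l.take (i+1) ++ l.drop j, ?_, ?_, ?_, ?_, ?_⟩
              · refine List.isChain_append.2 ⟨hch.prefix (List.take_prefix _ _),
                  hch.suffix (List.drop_suffix _ _), ?_⟩
                intro x hx y hy
                rw [htl i (by omega)] at hx
                rw [hdh j hj] at hy
                simp only [Option.mem_def, Option.some.injEq] at hx hy
                rw [← hx, ← hy]
                exact hadjij
              · rw [List.head?_append_of_ne_nil]
                · exact hht (i+1) (by omega)
                · exact List.ne_nil_of_length_pos (by rw [List.length_take]; omega)
              · rw [List.getLast?_append_of_ne_nil _
                  (List.ne_nil_of_length_pos (by rw [List.length_drop]; omega))]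
                exact hdl j hj
              · intro z hz
                rcases List.mem_append.1 hz with h | h
                · exact hm z (List.take_subset _ _ h)
                · exact hm z (List.drop_subset _ _ h)
              · rw [List.length_append, List.length_take, List.length_drop]
                omega
          have hnd : l.Nodup := by
            rw [List.nodup_iff_injective_get]
            rintro ⟨i, hi⟩ ⟨j, hj⟩ hgij
            simp only [List.get_eq_getElem] at hgij
            by_contra hne2
            have hijne : i ≠ j := fun h => hne2 (by simpa using h)
            rcases Nat.lt_or_ge i j with hlt | hge
            · exact hshort i j hj hlt (Or.inl hgij)
            · have hlt : j < i := by omega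
              exact hshort j i hi hlt (Or.inl hgij.symm)
          have hstep : ∀ (i j : ℕ) (hj : j < l.length) (hij : i + 1 = j),
              G.Adj (l[i]'(by omega)) (l[j]'hj) := by
            intro i j hj hij
            subst hij
            exact hadj i hj
          have hlent : l.length ≤ t - 1 := by
            by_contra hbig
            push_neg at hbig
            have hbig' : t ≤ l.length := by omega
            apply hPt
            have hinj := List.nodup_iff_injective_get.1 hnd
            refine ⟨⟨fun a : Fin t => l[a.val]'(by omega), ?_⟩, ?_⟩
            · intro a b hab
              simp only at hab
              have h1 : l.get ⟨a.val, by omega⟩ = l.get ⟨b.val, by omega⟩ := by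
                simpa [List.get_eq_getElem] using hab
              have h2 := hinj h1
              exact Fin.ext (by simpa using congrArg Fin.val h2)
            · intro a b
              change G.Adj (l[a.val]'(by omega)) (l[b.val]'(by omega)) ↔ _
              constructor
              · intro hadj'
                rw [SimpleGraph.pathGraph_adj]
                rcases Nat.lt_trichotomy a.val b.val with hlt | heq | hgt
                · by_cases hc : b.val = a.val + 1
                  · left; omega
                  · exact ((hshort a.val b.val (by omega) hlt
                      (Or.inr ⟨by omega, hadj'⟩))).elim
                · exfalso
                  have : a = b := Fin.ext heq
                  subst this
                  exact G.loopless.irrefl _ hadj'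
                · by_cases hc : a.val = b.val + 1
                  · right; omega
                  · exact ((hshort b.val a.val (by omega) hgt
                      (Or.inr ⟨by omega, hadj'.symm⟩))).elim
              · intro hpg
                rw [SimpleGraph.pathGraph_adj] at hpg
                rcases hpg with h | h
                · exact hstep a.val b.val (by omega) h
                · exact (hstep b.val a.val (by omega) h).symm
          obtain ⟨s, hs, hreach⟩ := Stmt18Aux2.reach_of_list bag top key G hkeyinj hsr
            l.length l le_rfl hnd hch v u hh hl hm
          exact Stmt18Aux2.reach_mem_DSet bag top key htopmem hreach (by omega)
      refine le_trans (Finset.card_le_card ?_)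
        (le_trans (Stmt18Aux2.DSet_card bag top hbagcard v (t-2))
          (Nat.pow_le_pow_right (by omega) (by omega)))
      intro u hu
      simp only [Finset.mem_filter] at hu
      exact hsub u hu.2
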